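/- Let G be a finite simple graph with n vertices and m edges, and let a, b be integers with 1 ≤ b ≤ a. Then the expected number of independent b-fold transversals of the random a-fold cover of G equals C(a,b)^n · (C(a−b,b)/C(a,b))^m, where C(x,y) denotes the binomial coefficient (so C(a−b,b) = 0 when a < 2b). -/

import Mathlib

namespace DP

/-- Adjacency in the cover graph `H_σ` determined by the tuple `σ` of permutations
(one permutation of `Fin k` per edge of `G`): for an edge `uv` of `G` with `u < v`,
the vertex `(u, i)` is adjacent to `(v, σ_{uv} i)`, and there are no other edges. -/
def coverAdj {V : Type*} [LinearOrder V] (G : SimpleGraph V) (k : ℕ)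
    (σ : G.edgeSet → Equiv.Perm (Fin k)) (p q : V × Fin k) : Prop :=
  ∃ h : G.Adj p.1 q.1,
    (p.1 < q.1 ∧ (σ ⟨s(p.1, q.1), G.mem_edgeSet.mpr h⟩) p.2 = q.2) ∨
    (q.1 < p.1 ∧ (σ ⟨s(p.1, q.1), G.mem_edgeSet.mpr h⟩) q.2 = p.2)

/-- `T` is an independent `b`-fold transversal of the cover `H_σ`: it contains exactly
`b` elements of `{v} × Fin k` for each vertex `v`, and no two of its elements are
adjacent in `H_σ`. -/
def IsIndepTransversal {V : Type*} [LinearOrder V] (G : SimpleGraph V) (k b : ℕ)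
    (σ : G.edgeSet → Equiv.Perm (Fin k)) (T : Finset (V × Fin k)) : Prop :=
  (∀ v : V, (T.filter (fun p => p.1 = v)).card = b) ∧
    ∀ p ∈ T, ∀ q ∈ T, ¬ coverAdj G k σ p q

/-- The probability, over a uniformly random tuple `σ` of permutations (one per edge),
that the cover graph `H_σ` admits an independent `b`-fold transversal. -/
noncomputable def probColorable {V : Type*} [LinearOrder V] (G : SimpleGraph V)
    (k b : ℕ) : ℝ :=
  (Nat.card {σ : G.edgeSet → Equiv.Perm (Fin k) //
      ∃ T : Finset (V × Fin k), IsIndepTransversal G k b σ T} : ℝ) /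
    (Nat.card (G.edgeSet → Equiv.Perm (Fin k)) : ℝ)

-- Lemma A: permutations extending a fixed injective partial function
private lemma card_ext_perm {a : ℕ} (S : Finset (Fin a)) (g : {x : Fin a // x ∈ S} → Fin a)
    (hg : Function.Injective g) :
    Nat.card {π : Equiv.Perm (Fin a) // ∀ i : {x : Fin a // x ∈ S}, π i.1 = g i}
      = Nat.factorial (a - S.card) := by
  classical
  set Tg : Finset (Fin a) := Finset.univ.image g with hTgdef
  have hmemTg : ∀ y, y ∈ Tg ↔ ∃ i, g i = y := by
    intro y; simp [hTgdef]
  have hTgcard : Tg.card = S.card := by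
    rw [hTgdef, Finset.card_image_of_injective _ hg, Finset.card_univ, Fintype.card_coe]
  have hiff : ∀ π : Equiv.Perm (Fin a), (∀ i : {x : Fin a // x ∈ S}, π i.1 = g i) →
      ∀ x : Fin a, ¬ x ∈ S ↔ ¬ π x ∈ Tg := by
    intro π hπ x
    constructor
    · intro hx hmem
      obtain ⟨i, hi⟩ := (hmemTg _).1 hmem
      rw [← hπ i] at hi
      exact hx (π.injective hi ▸ i.2)
    · intro hmem hx
      exact hmem ((hmemTg _).2 ⟨⟨x, hx⟩, (hπ ⟨x, hx⟩).symm⟩)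
  set F : {π : Equiv.Perm (Fin a) // ∀ i : {x : Fin a // x ∈ S}, π i.1 = g i}
      → ({x : Fin a // ¬ x ∈ S} ≃ {y : Fin a // ¬ y ∈ Tg}) :=
    fun π => (π.1 : Fin a ≃ Fin a).subtypeEquiv (hiff π.1 π.2) with hF
  have hFbij : Function.Bijective F := by
    constructor
    · rintro ⟨π₁, h₁⟩ ⟨π₂, h₂⟩ h
      apply Subtype.ext
      apply Equiv.ext
      intro x
      by_cases hx : x ∈ S
      · rw [show x = (⟨x, hx⟩ : {x : Fin a // x ∈ S}).1 from rfl, h₁ ⟨x, hx⟩, h₂ ⟨x, hx⟩]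
      · have := congrArg (fun e : ({x : Fin a // ¬ x ∈ S} ≃ {y : Fin a // ¬ y ∈ Tg}) =>
          ((e ⟨x, hx⟩ : {y : Fin a // ¬ y ∈ Tg}) : Fin a)) h
        simpa [hF, Equiv.subtypeEquiv] using this
    · intro e
      have hrange : ∀ y, y ∈ Set.range g ↔ y ∈ Tg := by
        intro y; rw [hmemTg]; exact Set.mem_range
      set gE : {x : Fin a // x ∈ S} ≃ {y : Fin a // y ∈ Tg} :=
        (Equiv.ofInjective g hg).trans (Equiv.subtypeEquivRight hrange) with hgE
      have hgEval : ∀ i, (gE i : Fin a) = g i := fun i => rfl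
      set π₀ : Equiv.Perm (Fin a) :=
        ((Equiv.sumCompl (· ∈ S)).symm.trans ((gE.sumCongr e).trans
          (Equiv.sumCompl (· ∈ Tg)))) with hπ₀
      have hπ₀S : ∀ i : {x : Fin a // x ∈ S}, π₀ i.1 = g i := by
        intro i
        rw [hπ₀]
        simp only [Equiv.trans_apply]
        rw [Equiv.sumCompl_symm_apply_of_pos i.2]
        simp [hgEval]
      have hπ₀C : ∀ x (hx : ¬ x ∈ S), π₀ x = (e ⟨x, hx⟩ : Fin a) := by
        intro x hx
        rw [hπ₀]
        simp only [Equiv.trans_apply]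
        rw [Equiv.sumCompl_symm_apply_of_neg hx]
        simp
      refine ⟨⟨π₀, hπ₀S⟩, ?_⟩
      apply Equiv.ext
      rintro ⟨x, hx⟩
      apply Subtype.ext
      show π₀ x = _
      rw [hπ₀C x hx]
  rw [Nat.card_eq_of_bijective F hFbij, Nat.card_eq_fintype_card]
  have hc1 : Fintype.card {x : Fin a // ¬ x ∈ S} = a - S.card := by
    rw [Fintype.card_subtype_compl]
    simp
  have hc2 : Fintype.card {y : Fin a // ¬ y ∈ Tg} = a - S.card := by
    rw [Fintype.card_subtype_compl]
    simp [hTgcard]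
  rw [Fintype.card_equiv (Fintype.equivOfCardEq (hc1.trans hc2.symm)), hc1]

private lemma card_avoid {a b : ℕ} (S S' : Finset (Fin a)) (hS : S.card = b) (hS' : S'.card = b) :
    Nat.card {π : Equiv.Perm (Fin a) // ∀ i ∈ S, π i ∉ S'}
      = (a - b).descFactorial b * Nat.factorial (a - b) := by
  classical
  rw [Nat.card_eq_fintype_card, Fintype.card_subtype]
  rw [Finset.card_eq_sum_card_fiberwise
    (f := fun (π : Equiv.Perm (Fin a)) (i : {x : Fin a // x ∈ S}) => π i.1)
    (t := (Finset.univ : Finset ({x : Fin a // x ∈ S} → Fin a)))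
    (fun _ _ => Finset.mem_univ _)]
  have hfib : ∀ g : {x : Fin a // x ∈ S} → Fin a,
      ((Finset.univ.filter (fun π : Equiv.Perm (Fin a) => ∀ i ∈ S, π i ∉ S')).filter
        (fun π => (fun i : {x : Fin a // x ∈ S} => π i.1) = g)).card
      = if Function.Injective g ∧ ∀ i, g i ∉ S' then Nat.factorial (a - b) else 0 := by
    intro g
    split_ifs with hgood
    · have heq : ((Finset.univ.filter (fun π : Equiv.Perm (Fin a) => ∀ i ∈ S, π i ∉ S')).filter
          (fun π => (fun i : {x : Fin a // x ∈ S} => π i.1) = g))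
          = Finset.univ.filter (fun π : Equiv.Perm (Fin a) =>
              ∀ i : {x : Fin a // x ∈ S}, π i.1 = g i) := by
        ext π
        simp only [Finset.mem_filter, Finset.mem_univ, true_and, funext_iff]
        constructor
        · exact fun h => h.2
        · intro h
          refine ⟨fun i hi => ?_, h⟩
          rw [h ⟨i, hi⟩]
          exact hgood.2 ⟨i, hi⟩
      rw [heq]
      have := card_ext_perm S g hgood.1
      rw [Nat.card_eq_fintype_card, Fintype.card_subtype, hS] at this
      exact this
    · rw [Finset.card_eq_zero, Finset.eq_empty_iff_forall_notMem]
      intro π hπ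
      simp only [Finset.mem_filter, Finset.mem_univ, true_and] at hπ
      apply hgood
      have h2 : ∀ i : {x : Fin a // x ∈ S}, π i.1 = g i := fun i => congrFun hπ.2 i
      constructor
      · intro i j hij
        rw [← h2 i, ← h2 j] at hij
        exact Subtype.ext (π.injective hij)
      · intro i
        rw [← h2 i]
        exact hπ.1 i.1 i.2
  rw [Finset.sum_congr rfl (fun g _ => hfib g), ← Finset.sum_filter, Finset.sum_const,
    smul_eq_mul]
  congr 1
  rw [← Fintype.card_subtype]
  have E : {g : {x : Fin a // x ∈ S} → Fin a // Function.Injective g ∧ ∀ i, g i ∉ S'}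
      ≃ ({x : Fin a // x ∈ S} ↪ {y : Fin a // ¬ y ∈ S'}) :=
    { toFun := fun g => ⟨fun i => ⟨g.1 i, g.2.2 i⟩,
        fun i j h => g.2.1 (congrArg Subtype.val h)⟩
      invFun := fun f => ⟨fun i => (f i).1,
        fun i j h => f.injective (Subtype.ext h), fun i => (f i).2⟩
      left_inv := fun g => rfl
      right_inv := fun f => rfl }
  rw [Fintype.card_congr E, Fintype.card_embedding_eq, Fintype.card_coe, hS,
    Fintype.card_subtype_compl]
  have h1 : Fintype.card {x : Fin a // x ∈ S'} = b := by
    rw [← hS']; exact Fintype.card_coe S'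
  rw [h1, Fintype.card_fin]

/-- Per-edge goodness of a permutation w.r.t. an assignment of subsets to vertices. -/
def Good {n a : ℕ} (S : Fin n → Finset (Fin a)) (e : Sym2 (Fin n)) (π : Equiv.Perm (Fin a)) :
    Prop :=
  ∀ u v : Fin n, u < v → e = s(u, v) → ∀ i ∈ S u, π i ∉ S v

private lemma card_good {n a b : ℕ} (G : SimpleGraph (Fin n)) (S : Fin n → Finset (Fin a))
    (hS : ∀ v, (S v).card = b) (e : G.edgeSet) :
    Nat.card {π : Equiv.Perm (Fin a) // Good S e.1 π}
      = (a - b).descFactorial b * Nat.factorial (a - b) := by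
  have key : ∀ u v : Fin n, u < v →
      Nat.card {π : Equiv.Perm (Fin a) // Good S s(u, v) π}
        = (a - b).descFactorial b * Nat.factorial (a - b) := by
    intro u v huv
    have hiff : ∀ π : Equiv.Perm (Fin a), Good S s(u, v) π ↔ ∀ i ∈ S u, π i ∉ S v := by
      intro π
      constructor
      · exact fun h => h u v huv rfl
      · intro h u' v' h' heq
        rcases Sym2.eq_iff.mp heq with ⟨h1, h2⟩ | ⟨h1, h2⟩
        · rw [← h1, ← h2]; exact h
        · subst h1; subst h2; exact absurd h' (lt_asymm huv)
    rw [Nat.card_congr (Equiv.subtypeEquivRight hiff)]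
    exact card_avoid (S u) (S v) (hS u) (hS v)
  obtain ⟨e, he⟩ := e
  induction e using Sym2.ind with
  | _ u v =>
    have hne : u ≠ v := (G.mem_edgeSet.mp he).ne
    show Nat.card {π : Equiv.Perm (Fin a) // Good S s(u, v) π} = _
    rcases lt_or_gt_of_ne hne with h | h
    · exact key u v h
    · rw [show s(u, v) = s(v, u) from Sym2.eq_swap]
      exact key v u h

private lemma transversal_prop {n a b : ℕ} (G : SimpleGraph (Fin n))
    (S : Fin n → {s : Finset (Fin a) // s.card = b})
    (f : ∀ e : G.edgeSet, {π : Equiv.Perm (Fin a) // Good (fun v => (S v).1) e.1 π}) :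
    IsIndepTransversal G a b (fun e => (f e).1)
      (Finset.univ.filter (fun p : Fin n × Fin a => p.2 ∈ (S p.1).1)) := by
  constructor
  · intro v
    rw [Finset.filter_filter]
    have heq : Finset.univ.filter (fun p : Fin n × Fin a => p.2 ∈ (S p.1).1 ∧ p.1 = v)
        = (S v).1.image (fun i => (v, i)) := by
      ext ⟨u, i⟩
      simp only [Finset.mem_filter, Finset.mem_univ, true_and, Finset.mem_image,
        Prod.mk.injEq]
      constructor
      · rintro ⟨hi, rfl⟩; exact ⟨i, hi, rfl, rfl⟩
      · rintro ⟨j, hj, rfl, rfl⟩; exact ⟨hj, rfl⟩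
    have h2 := congrArg Finset.card heq
    rw [Finset.card_image_of_injective _ (fun i j h => congrArg Prod.snd h), (S v).2] at h2
    convert h2 using 2
  · rintro ⟨pu, pi⟩ hp ⟨qu, qi⟩ hq ⟨hadj, hcase⟩
    rw [Finset.mem_filter] at hp hq
    rcases hcase with ⟨hlt, heq⟩ | ⟨hlt, heq⟩
    · exact (f ⟨s(pu, qu), G.mem_edgeSet.mpr hadj⟩).2 pu qu hlt rfl pi hp.2 (heq ▸ hq.2)
    · exact (f ⟨s(pu, qu), G.mem_edgeSet.mpr hadj⟩).2 qu pu hlt Sym2.eq_swap qi hq.2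
        (heq ▸ hp.2)

private lemma card_pairs {n a b : ℕ} (G : SimpleGraph (Fin n)) :
    Nat.card {x : (G.edgeSet → Equiv.Perm (Fin a)) × Finset (Fin n × Fin a) //
        IsIndepTransversal G a b x.1 x.2}
      = Nat.card (Σ _S : Fin n → {s : Finset (Fin a) // s.card = b},
          ∀ e : G.edgeSet,
            {π : Equiv.Perm (Fin a) // Good (fun v => (_S v).1) e.1 π}) := by
  refine (Nat.card_eq_of_bijective
    (fun y => ⟨(fun e => (y.2 e).1,
      Finset.univ.filter (fun p : Fin n × Fin a => p.2 ∈ (y.1 p.1).1)),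
      transversal_prop G y.1 y.2⟩) ⟨?_, ?_⟩).symm
  · rintro ⟨S, f⟩ ⟨S', f'⟩ h
    rw [Subtype.mk.injEq, Prod.mk.injEq] at h
    have hS : S = S' := by
      funext v
      apply Subtype.ext
      ext i
      have := Finset.ext_iff.mp h.2 (v, i)
      simpa using this
    subst hS
    have hf : f = f' := by
      funext e
      exact Subtype.ext (congrFun h.1 e)
    rw [hf]
  · rintro ⟨⟨σ, T⟩, hT⟩
    have hT' : IsIndepTransversal G a b σ T := hT
    refine ⟨⟨fun v => ⟨(T.filter (fun p => p.1 = v)).image Prod.snd, ?_⟩,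
      fun e => ⟨σ e, ?_⟩⟩, ?_⟩
    · rw [Finset.card_image_of_injOn]
      · convert hT'.1 v using 2
      intro p hp q hq hpq
      simp only [Finset.coe_filter, Set.mem_setOf_eq] at hp hq
      exact Prod.ext (hp.2.trans hq.2.symm) hpq
    · intro u v huv he i hi hcon
      simp only [Finset.mem_image, Finset.mem_filter] at hi hcon
      obtain ⟨⟨p1, p2⟩, ⟨hpT, hp1⟩, hp2⟩ := hi
      dsimp at hp1 hp2
      subst hp1
      obtain ⟨⟨q1, q2⟩, ⟨hqT, hq1⟩, hq2⟩ := hcon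
      dsimp at hq1 hq2
      subst hq1
      have hadj : G.Adj p1 q1 := G.mem_edgeSet.mp (he ▸ e.2)
      have hee : (⟨s(p1, q1), G.mem_edgeSet.mpr hadj⟩ : G.edgeSet) = e :=
        Subtype.ext he.symm
      refine hT'.2 (p1, p2) hpT (q1, q2) hqT ⟨hadj, Or.inl ⟨huv, ?_⟩⟩
      show (σ ⟨s(p1, q1), G.mem_edgeSet.mpr hadj⟩) p2 = q2
      rw [hee, hp2, hq2]
    · apply Subtype.ext
      refine Prod.ext rfl ?_
      dsimp
      ext ⟨v, i⟩
      simp only [Finset.mem_filter, Finset.mem_univ, true_and, Finset.mem_image]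
      constructor
      · rintro ⟨⟨p1, p2⟩, hp, hp2⟩
        dsimp at hp hp2
        rw [← hp.2, ← hp2]
        exact hp.1
      · intro hvi
        exact ⟨(v, i), ⟨hvi, rfl⟩, rfl⟩

/-- The expected number of independent `b`-fold transversals of the random `a`-fold
cover of a graph `G` with `n` vertices and `m` edges equals
`C(a,b)^n · (C(a-b,b)/C(a,b))^m`. -/
theorem statement_7 {n : ℕ} (G : SimpleGraph (Fin n)) (a b : ℕ)
    (hb : 1 ≤ b) (hba : b ≤ a) :
    (Nat.card {x : (G.edgeSet → Equiv.Perm (Fin a)) × Finset (Fin n × Fin a) //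
        IsIndepTransversal G a b x.1 x.2} : ℝ) /
      (Nat.card (G.edgeSet → Equiv.Perm (Fin a)) : ℝ) =
    (a.choose b : ℝ) ^ n *
      (((a - b).choose b : ℝ) / (a.choose b : ℝ)) ^ G.edgeSet.ncard := by
  classical
  haveI : Fintype G.edgeSet := Fintype.ofFinite _
  set c : ℕ := (a - b).descFactorial b * Nat.factorial (a - b) with hc
  set m : ℕ := G.edgeSet.ncard with hm
  have hmcard : Nat.card G.edgeSet = m := Nat.card_coe_set_eq _
  -- numerator
  have hnum : Nat.card {x : (G.edgeSet → Equiv.Perm (Fin a)) × Finset (Fin n × Fin a) //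
      IsIndepTransversal G a b x.1 x.2} = a.choose b ^ n * c ^ m := by
    rw [card_pairs, Nat.card_eq_fintype_card, Fintype.card_sigma]
    have hsum : ∀ S : Fin n → {s : Finset (Fin a) // s.card = b},
        Fintype.card (∀ e : G.edgeSet,
          {π : Equiv.Perm (Fin a) // Good (fun v => (S v).1) e.1 π}) = c ^ m := by
      intro S
      rw [← Nat.card_eq_fintype_card, Nat.card_pi]
      rw [Finset.prod_congr rfl
        (fun e _ => card_good G (fun v => (S v).1) (fun v => (S v).2) e)]
      rw [Finset.prod_const, Finset.card_univ, ← Nat.card_eq_fintype_card, hmcard]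
    rw [Finset.sum_congr rfl (fun S _ => hsum S), Finset.sum_const, Finset.card_univ,
      smul_eq_mul]
    congr 1
    rw [← Nat.card_eq_fintype_card, Nat.card_fun, Nat.card_eq_fintype_card,
      Fintype.card_finset_len, Fintype.card_fin, Nat.card_eq_fintype_card, Fintype.card_fin]
  -- denominator
  have hden : Nat.card (G.edgeSet → Equiv.Perm (Fin a)) = Nat.factorial a ^ m := by
    rw [Nat.card_fun, Nat.card_eq_fintype_card, Fintype.card_perm, Fintype.card_fin, hmcard]
  rw [hnum, hden]
  have hC : (a.choose b : ℝ) ≠ 0 := Nat.cast_ne_zero.mpr (Nat.choose_pos hba).ne'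
  have hfa : (Nat.factorial a : ℝ) ≠ 0 := Nat.cast_ne_zero.mpr (Nat.factorial_ne_zero a)
  have hkey : (c : ℝ) / (Nat.factorial a : ℝ) = ((a - b).choose b : ℝ) / (a.choose b : ℝ) := by
    rw [div_eq_div_iff hfa hC]
    have hnat : c * a.choose b = (a - b).choose b * Nat.factorial a := by
      rw [hc, Nat.descFactorial_eq_factorial_mul_choose,
        ← Nat.choose_mul_factorial_mul_factorial hba]
      ring
    exact_mod_cast hnat
  push_cast
  rw [mul_div_assoc, ← div_pow, hkey]

end DP
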